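/- Consistency property: in the three-phase Cahn–Hilliard model, if c_2 = 0 (and c_1 + c_3 = 1), then f_2 = 0, where f_2 = (Σ_T/(3Σ_2)) [ (1/Σ_1)(∂F_0/∂c_2 − ∂F_0/∂c_1) + (1/Σ_3)(∂F_0/∂c_2 − ∂F_0/∂c_3) ] evaluated at (c, 0, 1−c); hence the chemical potential μ_2 = (12/ε)Σ_2 f_2 − (3/4)εΣ_2 Δc_2 vanishes whenever additionally Δc_2 = 0. -/

import Mathlib

/-- The triple-well potential F₀. -/
noncomputable def F0 (σ12 σ13 σ23 c1 c2 c3 : ℝ) : ℝ :=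
  σ12 * c1 ^ 2 * c2 ^ 2 + σ13 * c1 ^ 2 * c3 ^ 2 + σ23 * c2 ^ 2 * c3 ^ 2 +
    c1 * c2 * c3 * ((σ12 + σ13 - σ23) * c1 + (σ12 + σ23 - σ13) * c2 +
      (σ13 + σ23 - σ12) * c3)

/-- Consistency: f₂ = 0 when c₂ = 0 (and c₁ + c₃ = 1); hence μ₂ = 0 whenever
additionally Δc₂ = 0. Partial derivatives of F₀ are taken as derivatives of the
one-variable slices, evaluated at (c, 0, 1 - c). -/
theorem consistency_f2_vanishes
    (σ12 σ13 σ23 S1 S2 S3 ST ε : ℝ)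
    (hS1 : S1 = σ12 + σ13 - σ23)
    (hS2 : S2 = σ12 + σ23 - σ13)
    (hS3 : S3 = σ13 + σ23 - σ12)
    (hS1ne : S1 ≠ 0) (hS2ne : S2 ≠ 0) (hS3ne : S3 ≠ 0)
    (hST : 3 / ST = 1 / S1 + 1 / S2 + 1 / S3)
    (hε : ε > 0) (c : ℝ)
    (d1 d2 d3 : ℝ)
    (hd1 : d1 = deriv (fun x => F0 σ12 σ13 σ23 x 0 (1 - c)) c)
    (hd2 : d2 = deriv (fun x => F0 σ12 σ13 σ23 c x (1 - c)) 0)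
    (hd3 : d3 = deriv (fun x => F0 σ12 σ13 σ23 c 0 x) (1 - c))
    (f2 : ℝ)
    (hf2 : f2 = ST / (3 * S2) * (1 / S1 * (d2 - d1) + 1 / S3 * (d2 - d3))) :
    f2 = 0 ∧ ∀ Δc2 : ℝ, Δc2 = 0 →
      12 / ε * S2 * f2 - 3 / 4 * ε * S2 * Δc2 = 0 := by
  -- slice 1
  have e1 : (fun x => F0 σ12 σ13 σ23 x 0 (1 - c)) = fun x => σ13 * (1 - c) ^ 2 * x ^ 2 := by
    funext x; simp only [F0]; ring
  have h1 : HasDerivAt (fun x => F0 σ12 σ13 σ23 x 0 (1 - c))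
      (σ13 * (1 - c) ^ 2 * (2 * c)) c := by
    rw [e1]
    have := (hasDerivAt_pow 2 c).const_mul (σ13 * (1 - c) ^ 2)
    exact this.congr_deriv (by norm_num)
  -- slice 3
  have e3 : (fun x => F0 σ12 σ13 σ23 c 0 x) = fun x => σ13 * c ^ 2 * x ^ 2 := by
    funext x; simp only [F0]; ring
  have h3 : HasDerivAt (fun x => F0 σ12 σ13 σ23 c 0 x)
      (σ13 * c ^ 2 * (2 * (1 - c))) (1 - c) := by
    rw [e3]
    have := (hasDerivAt_pow 2 (1 - c)).const_mul (σ13 * c ^ 2)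
    exact this.congr_deriv (by norm_num)
  -- slice 2
  have e2 : (fun x => F0 σ12 σ13 σ23 c x (1 - c)) = fun x =>
      (σ12 * c ^ 2 + σ23 * (1 - c) ^ 2 + c * (1 - c) * (σ12 + σ23 - σ13)) * x ^ 2
        + (c * (1 - c) * ((σ12 + σ13 - σ23) * c + (σ13 + σ23 - σ12) * (1 - c))) * x
        + σ13 * c ^ 2 * (1 - c) ^ 2 := by
    funext x; simp only [F0]; ring
  have h2 : HasDerivAt (fun x => F0 σ12 σ13 σ23 c x (1 - c))
      (c * (1 - c) * ((σ12 + σ13 - σ23) * c + (σ13 + σ23 - σ12) * (1 - c))) 0 := by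
    rw [e2]
    have hx : HasDerivAt (fun x : ℝ =>
        (σ12 * c ^ 2 + σ23 * (1 - c) ^ 2 + c * (1 - c) * (σ12 + σ23 - σ13)) * x ^ 2
        + (c * (1 - c) * ((σ12 + σ13 - σ23) * c + (σ13 + σ23 - σ12) * (1 - c))) * x
        + σ13 * c ^ 2 * (1 - c) ^ 2)
        ((σ12 * c ^ 2 + σ23 * (1 - c) ^ 2 + c * (1 - c) * (σ12 + σ23 - σ13)) * (2 * 0)
          + (c * (1 - c) * ((σ12 + σ13 - σ23) * c + (σ13 + σ23 - σ12) * (1 - c))) * 1 + 0) 0 := by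
      exact (((hasDerivAt_pow 2 (0 : ℝ)).const_mul _).add
        ((hasDerivAt_id 0).const_mul _)).add_const _ |>.congr_deriv (by norm_num)
    simpa using hx
  have hd1' : d1 = σ13 * (1 - c) ^ 2 * (2 * c) := by rw [hd1, h1.deriv]
  have hd3' : d3 = σ13 * c ^ 2 * (2 * (1 - c)) := by rw [hd3, h3.deriv]
  have hd2' : d2 = c * (1 - c) * ((σ12 + σ13 - σ23) * c + (σ13 + σ23 - σ12) * (1 - c)) := by
    rw [hd2, h2.deriv]
  have hf : f2 = 0 := by
    rw [hf2, hd1', hd2', hd3']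
    subst hS1 hS2 hS3
    field_simp
    ring
  exact ⟨hf, fun Δc2 hΔ => by rw [hf, hΔ]; ring⟩
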